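/- For all positive integers N and reals M with N·M ≥ 1, there exists a positive integer m with N ≤ m ≤ 3N·log₂(2NM/ln 2) such that m > N·log₂(e·m·M). -/

import Mathlib

/-- for all positive integers `N` and reals `M` with `N·M ≥ 1`,
there is a positive integer `m` with `N ≤ m ≤ 3N·log₂(2NM/ln 2)` such that
`m > N·log₂(e·m·M)`. -/
theorem exists_m_growth_to_vc (N : ℕ) (M : ℝ) (hN : 0 < N) (hNM : 1 ≤ N * M) :
    ∃ m : ℕ, 0 < m ∧ N ≤ m ∧
      (m : ℝ) ≤ 3 * N * Real.logb 2 (2 * N * M / Real.log 2) ∧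
      (N : ℝ) * Real.logb 2 (Real.exp 1 * m * M) < m := by
  have h2 : (0:ℝ) < Real.log 2 := Real.log_pos (by norm_num)
  have hNpos : (0:ℝ) < N := by exact_mod_cast hN
  have hN1 : (1:ℝ) ≤ N := by exact_mod_cast hN
  have hM : 0 < M := by nlinarith
  set L := Real.logb 2 (2 * N * M / Real.log 2) with hLdef
  have hlog2lt1 : Real.log 2 < 1 := by
    have := Real.log_lt_sub_one_of_pos (by norm_num : (0:ℝ) < 2) (by norm_num)
    linarith
  have hx : (2:ℝ) < 2 * N * M / Real.log 2 := by
    rw [lt_div_iff₀ h2]; nlinarith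
  have hL1 : 1 < L := by
    have := Real.logb_lt_logb (by norm_num : (1:ℝ) < 2) (by norm_num : (0:ℝ) < 2) hx
    simpa [hLdef] using this
  have h2NL : (0:ℝ) ≤ 2 * N * L := by positivity
  refine ⟨⌊2 * N * L⌋₊ + 1, Nat.succ_pos _, ?_, ?_, ?_⟩
  · have : N ≤ ⌊2 * N * L⌋₊ := Nat.le_floor (by nlinarith)
    omega
  · push_cast
    have h1 : (⌊2 * N * L⌋₊ : ℝ) ≤ 2 * N * L := Nat.floor_le h2NL
    nlinarith
  · set m : ℕ := ⌊2 * N * L⌋₊ + 1 with hmdef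
    have hmr : 2 * N * L < (m : ℝ) := by
      have := Nat.lt_floor_add_one (2 * N * L)
      push_cast [hmdef]; push_cast at this; linarith
    have hmpos : (0:ℝ) < m := by positivity
    -- key inequality: log (m*M*b) ≤ m*M*b - 1 with b = log 2 / (2NM)
    have hb : (0:ℝ) < Real.log 2 / (2 * N * M) := by positivity
    have hkey : Real.log ((m:ℝ) * M * (Real.log 2 / (2 * N * M))) ≤
        (m:ℝ) * M * (Real.log 2 / (2 * N * M)) - 1 :=
      Real.log_le_sub_one_of_pos (by positivity)
    have hprod : (m:ℝ) * M * (Real.log 2 / (2 * N * M)) = (m:ℝ) * Real.log 2 / (2 * N) := by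
      field_simp
    have hlogsplit : Real.log ((m:ℝ) * M * (Real.log 2 / (2 * N * M))) =
        Real.log ((m:ℝ) * M) + Real.log (Real.log 2) - Real.log (2 * N * M) := by
      rw [Real.log_mul (by positivity) (by positivity),
        Real.log_div (ne_of_gt h2) (by positivity)]
      ring
    have hLval : L = (Real.log (2 * N * M) - Real.log (Real.log 2)) / Real.log 2 := by
      rw [hLdef, Real.logb, Real.log_div (by positivity) (ne_of_gt h2)]
    have hlogmM : Real.log ((m:ℝ) * M) ≤
        (m:ℝ) * Real.log 2 / (2 * N) - 1 + L * Real.log 2 := by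
      have hLl : L * Real.log 2 = Real.log (2 * N * M) - Real.log (Real.log 2) := by
        rw [hLval]; field_simp
      rw [hlogsplit, hprod] at hkey
      linarith
    have hlogE : Real.log (Real.exp 1 * m * M) = 1 + Real.log ((m:ℝ) * M) := by
      rw [mul_assoc, Real.log_mul (Real.exp_ne_zero 1) (by positivity), Real.log_exp]
    rw [Real.logb, hlogE, ← mul_div_assoc, div_lt_iff₀ h2]
    have hdiv : (N:ℝ) * ((m:ℝ) * Real.log 2 / (2 * N)) = (m:ℝ) * Real.log 2 / 2 := by
      field_simp
    have h1 := mul_le_mul_of_nonneg_left hlogmM hNpos.le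
    have h2' := mul_lt_mul_of_pos_right hmr h2
    nlinarith [h1, h2', hdiv]
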